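/- Let G be a group with elements x₁, x₂, x₃ generating a free subgroup of rank 3, and let φ₁, φ₂ ∈ Aut(G) satisfy φᵢ(xⱼ) = xⱼ for i,j ∈ {1,2} and φᵢ(x₃) = x₃xᵢ for i ∈ {1,2}. Then for every nontrivial reduced word w(a,b) in the free group on two letters, w(φ₁,φ₂)(x₃) = x₃ · w(x₁,x₂); in particular w(φ₁,φ₂) ≠ id, so ⟨φ₁,φ₂⟩ is a free group of rank 2. -/

import Mathlib

private lemma stmt2_aux {G : Type} [Group G] (φ : Fin 2 → MulAut G) (y : G)
    (hy : ∀ i : Fin 2, φ i y = y) (w : FreeGroup (Fin 2)) :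
    (FreeGroup.lift φ w) y = y := by
  induction w using FreeGroup.induction_on with
  | C1 => simp
  | of i =>
      have h1 : FreeGroup.lift φ (FreeGroup.of i) = φ i := FreeGroup.lift_apply_of
      rw [h1]; exact hy i
  | inv_of i h =>
      rw [map_inv]
      apply (FreeGroup.lift φ (FreeGroup.of i)).injective
      simpa using h.symm
  | mul u v hu hv =>
      rw [map_mul, MulAut.mul_apply, hv, hu]

/-- If `x₁, x₂, x₃ ∈ G` generate a free subgroup of rank 3 and
`φ₁, φ₂ ∈ Aut(G)` fix `x₁, x₂` and send `x₃ ↦ x₃ xᵢ`, then every word `w` in `φ₁, φ₂`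
satisfies `w(φ₁,φ₂)(x₃) = x₃ · w(x₁,x₂)`; in particular every nontrivial word gives a
nontrivial automorphism, so `⟨φ₁, φ₂⟩` is free of rank 2. -/
theorem stmt2 {G : Type} [Group G] (x : Fin 3 → G)
    (hx : Function.Injective (FreeGroup.lift x))
    (φ : Fin 2 → MulAut G)
    (hfix : ∀ i j : Fin 2, φ i (x j.castSucc) = x j.castSucc)
    (hx3 : ∀ i : Fin 2, φ i (x 2) = x 2 * x i.castSucc) :
    (∀ w : FreeGroup (Fin 2),
        (FreeGroup.lift φ w) (x 2) = x 2 * FreeGroup.lift (fun i => x i.castSucc) w) ∧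
    (∀ w : FreeGroup (Fin 2), w ≠ 1 → FreeGroup.lift φ w ≠ 1) ∧
    Function.Injective (FreeGroup.lift φ) := by
  set L : FreeGroup (Fin 2) →* G := FreeGroup.lift (fun i => x i.castSucc) with hL
  have hLof : ∀ j : Fin 2, L (FreeGroup.of j) = x j.castSucc := fun j => FreeGroup.lift_apply_of
  have hφof : ∀ i : Fin 2, FreeGroup.lift φ (FreeGroup.of i) = φ i := fun i => FreeGroup.lift_apply_of
  -- every word in the φ's fixes every element in the image of L
  have hfixL : ∀ (w v : FreeGroup (Fin 2)), (FreeGroup.lift φ w) (L v) = L v := by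
    intro w v
    induction v using FreeGroup.induction_on with
    | C1 => simp
    | of j => rw [hLof j]; exact stmt2_aux φ (x j.castSucc) (fun i => hfix i j) w
    | inv_of j h => rw [map_inv, map_inv, h]
    | mul u v hu hv => rw [map_mul, map_mul, hu, hv]
  -- main computation
  have main : ∀ w : FreeGroup (Fin 2), (FreeGroup.lift φ w) (x 2) = x 2 * L w := by
    intro w
    induction w using FreeGroup.induction_on with
    | C1 => simp
    | of i => rw [hφof i, hLof i]; exact hx3 i
    | inv_of i h =>
        rw [map_inv, map_inv, hφof i, hLof i]
        have key : φ i (x 2 * (x i.castSucc)⁻¹) = x 2 := by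
          rw [map_mul, map_inv, hx3 i, hfix i i]; group
        exact (φ i).injective (by simpa using key.symm)
    | mul u v hu hv =>
        rw [map_mul, map_mul, MulAut.mul_apply, hv, map_mul, hu, hfixL u v, mul_assoc]
  -- injectivity of L
  have hLinj : ∀ w : FreeGroup (Fin 2), L w = 1 → w = 1 := by
    intro w hw
    have hcomp : L = (FreeGroup.lift x).comp (FreeGroup.map Fin.castSucc) := by
      apply FreeGroup.ext_hom
      intro i
      simp [hL]
    have h0 : FreeGroup.lift x (FreeGroup.map Fin.castSucc w) = FreeGroup.lift x 1 := by
      rw [map_one]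
      have := DFunLike.congr_fun hcomp w
      simp only [MonoidHom.comp_apply] at this
      rw [← this]; exact hw
    have h2 : FreeGroup.map Fin.castSucc w = 1 := hx h0
    have hret : FreeGroup.map (fun j : Fin 3 => if h : (j : ℕ) < 2 then (⟨j, h⟩ : Fin 2) else 0)
        (FreeGroup.map Fin.castSucc w) = w := by
      rw [FreeGroup.map.comp]
      have hid : ((fun j : Fin 3 => if h : (j : ℕ) < 2 then (⟨j, h⟩ : Fin 2) else 0) ∘ Fin.castSucc)
          = id := by
        funext i
        simp [Fin.castSucc, Fin.castAdd, Fin.castLE, i.isLt]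
        intro h; exact absurd i.isLt (by omega)
      rw [hid, FreeGroup.map.id]
    rw [h2, map_one] at hret
    exact hret.symm
  have part2 : ∀ w : FreeGroup (Fin 2), w ≠ 1 → FreeGroup.lift φ w ≠ 1 := by
    intro w hw hcontra
    apply hw
    apply hLinj
    have hm := main w
    rw [hcontra] at hm
    simp only [MulAut.one_apply] at hm
    have h' : x 2 * 1 = x 2 * L w := by rw [mul_one]; exact hm
    exact (mul_left_cancel h').symm
  refine ⟨main, part2, ?_⟩
  intro w₁ w₂ h
  by_contra hne
  have hne' : w₁⁻¹ * w₂ ≠ 1 := fun hc => hne (inv_mul_eq_one.mp hc)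
  exact part2 _ hne' (by rw [map_mul, map_inv, h]; group)
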